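/- Let ε ∈ (0,1/2) and α ∈ (0,1/4) be constants, let m ≥ 1 be an integer with 2m ≥ 8·α^{−8}·ln(4/ε), and let 0 ≤ s₋ < s₊ ≤ 1 with s₊ − s₋ ≥ (3/2)·α⁴. Let X₊ and X₋ be independent binomial random variables with m trials each and success probabilities s₊ and s₋, respectively. Then P[X₊ ≤ X₋] < ε/2. -/
import Mathlib


open MeasureTheory

/-- The (possibly sub-)probability measure on `Bool` putting mass `p` on `true`
and mass `1 - p` on `false` (a Bernoulli distribution for `p ∈ [0,1]`). -/
noncomputable def bern (p : ℝ) : Measure Bool :=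
  ENNReal.ofReal p • Measure.dirac true + ENNReal.ofReal (1 - p) • Measure.dirac false

/-- The joint distribution of `m` independent Bernoulli(`p`) trials. -/
noncomputable def trials (m : ℕ) (p : ℝ) : Measure (Fin m → Bool) :=
  Measure.pi fun _ => bern p

/-- The number of successes among the trials: a binomial random variable. -/
def countTrue {m : ℕ} (f : Fin m → Bool) : ℕ := (Finset.univ.filter fun i => f i = true).card

instance (p : ℝ) : IsFiniteMeasure (bern p) := by
  constructor
  simp only [bern, Measure.add_apply, Measure.smul_apply, smul_eq_mul, measure_univ, mul_one]
  exact ENNReal.add_lt_top.2 ⟨ENNReal.ofReal_lt_top, ENNReal.ofReal_lt_top⟩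

lemma bern_singleton (p : ℝ) (b : Bool) :
    bern p {b} = ENNReal.ofReal (if b then p else 1 - p) := by
  cases b <;>
    simp [bern, Measure.dirac_apply]


instance (m : ℕ) (p : ℝ) : SFinite (trials m p) := by
  unfold trials; infer_instance

lemma trials_singleton (m : ℕ) (p : ℝ) (hp0 : 0 ≤ p) (hp1 : p ≤ 1) (f : Fin m → Bool) :
    trials m p {f} = ENNReal.ofReal (∏ i, if f i then p else 1 - p) := by
  rw [trials, ← Set.univ_pi_singleton f, Measure.pi_pi]
  rw [ENNReal.ofReal_prod_of_nonneg (fun i _ => by split <;> linarith)]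
  exact Finset.prod_congr rfl fun i _ => bern_singleton p (f i)

lemma measure_eq_sum {X : Type*} [Fintype X] [MeasurableSpace X] [MeasurableSingletonClass X]
    (μ : Measure X) (S : Set X) [DecidablePred (· ∈ S)] :
    μ S = ∑ x ∈ Finset.univ.filter (· ∈ S), μ {x} := by
  have hS : S = ⋃ x ∈ (Finset.univ.filter (· ∈ S) : Finset X), ({x} : Set X) := by
    ext y; simp
  conv_lhs => rw [hS]
  rw [measure_biUnion_finset]
  · intro i _ j _ hij
    simp [Set.disjoint_singleton_left, hij]
  · exact fun b _ => measurableSet_singleton b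

lemma countTrue_le {m : ℕ} (f : Fin m → Bool) : countTrue f ≤ m :=
  le_trans (Finset.card_filter_le _ _) (by simp)

lemma sum_ite_true {m : ℕ} (t : ℝ) (g : Fin m → Bool) :
    (∑ i, if g i then t else (0:ℝ)) = t * countTrue g := by
  rw [Finset.sum_ite, Finset.sum_const, Finset.sum_const_zero, add_zero, nsmul_eq_mul,
    mul_comm, countTrue]

lemma sum_ite_false {m : ℕ} (t : ℝ) (f : Fin m → Bool) :
    (∑ i, if f i then (0:ℝ) else t) = t * ((m : ℝ) - countTrue f) := by
  have h : ∀ i, (if f i then (0:ℝ) else t) = t - (if f i then t else 0) := by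
    intro i; split <;> ring
  simp only [h]
  rw [Finset.sum_sub_distrib, sum_ite_true, Finset.sum_const, Finset.card_univ]
  simp [Fintype.card_fin]; ring

lemma prod_exp_false {m : ℕ} (t : ℝ) (f : Fin m → Bool) :
    (∏ i, if f i then (1:ℝ) else Real.exp t) = Real.exp (t * ((m : ℝ) - countTrue f)) := by
  rw [← sum_ite_false t f, Real.exp_sum]
  refine Finset.prod_congr rfl fun i _ => ?_
  split <;> simp [Real.exp_zero]

lemma prod_exp_true {m : ℕ} (t : ℝ) (g : Fin m → Bool) :
    (∏ i, if g i then Real.exp t else (1:ℝ)) = Real.exp (t * countTrue g) := by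
  rw [← sum_ite_true t g, Real.exp_sum]
  refine Finset.prod_congr rfl fun i _ => ?_
  split <;> simp [Real.exp_zero]

lemma sum_prod_apply {m : ℕ} (a : Bool → ℝ) :
    ∑ f : Fin m → Bool, ∏ i, a (f i) = (a true + a false) ^ m := by
  rw [← Fintype.piFinset_univ, ← Finset.prod_univ_sum]
  simp

lemma real_bound (m : ℕ) (t sP sM : ℝ) (ht0 : 0 ≤ t) (hsp0 : 0 ≤ sP) (hsp1 : sP ≤ 1)
    (hsm0 : 0 ≤ sM) (hsm1 : sM ≤ 1) :
    ∑ fg ∈ Finset.univ.filter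
        (fun fg : (Fin m → Bool) × (Fin m → Bool) => countTrue fg.1 ≤ countTrue fg.2),
      (∏ i, if fg.1 i then sP else 1 - sP) * (∏ i, if fg.2 i then sM else 1 - sM)
    ≤ Real.exp (-(t * m)) * (sP + (1 - sP) * Real.exp t) ^ m
        * (sM * Real.exp t + (1 - sM)) ^ m := by
  have hwp : ∀ b : Bool, 0 ≤ (if b then sP else 1 - sP : ℝ) := fun b => by
    cases b <;> simp <;> linarith
  have hwm : ∀ b : Bool, 0 ≤ (if b then sM else 1 - sM : ℝ) := fun b => by
    cases b <;> simp <;> linarith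
  set F : (Fin m → Bool) → ℝ :=
    fun f => ∏ i, (if f i then sP else 1 - sP) * (if f i then 1 else Real.exp t) with hF
  set G : (Fin m → Bool) → ℝ :=
    fun g => ∏ i, (if g i then sM else 1 - sM) * (if g i then Real.exp t else 1) with hG
  have hFval : ∀ f, F f = (∏ i, if f i then sP else 1 - sP)
      * Real.exp (t * ((m : ℝ) - countTrue f)) := by
    intro f; rw [hF]; simp only [Finset.prod_mul_distrib, prod_exp_false]
  have hGval : ∀ g, G g = (∏ i, if g i then sM else 1 - sM)
      * Real.exp (t * countTrue g) := by
    intro g; simp only [hG, Finset.prod_mul_distrib, prod_exp_true]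
  have step1 : ∑ fg ∈ Finset.univ.filter
        (fun fg : (Fin m → Bool) × (Fin m → Bool) => countTrue fg.1 ≤ countTrue fg.2),
      (∏ i, if fg.1 i then sP else 1 - sP) * (∏ i, if fg.2 i then sM else 1 - sM)
      ≤ ∑ fg : (Fin m → Bool) × (Fin m → Bool), Real.exp (-(t * m)) * (F fg.1 * G fg.2) := by
    refine le_trans (Finset.sum_le_sum ?_) (Finset.sum_le_sum_of_subset_of_nonneg
      (Finset.subset_univ _) ?_)
    · rintro ⟨f, g⟩ hfg
      rw [Finset.mem_filter] at hfg
      have hle : countTrue f ≤ countTrue g := hfg.2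
      rw [hFval, hGval]
      have hkf : (countTrue f : ℝ) ≤ m := by exact_mod_cast countTrue_le f
      have : Real.exp (-(t * m)) * ((∏ i, if f i then sP else 1 - sP)
          * Real.exp (t * ((m : ℝ) - countTrue f))
          * ((∏ i, if g i then sM else 1 - sM) * Real.exp (t * countTrue g)))
          = (∏ i, if f i then sP else 1 - sP) * (∏ i, if g i then sM else 1 - sM)
          * Real.exp (t * ((countTrue g : ℝ) - countTrue f)) := by
        rw [show t * ((countTrue g : ℝ) - countTrue f)
            = -(t * m) + t * ((m : ℝ) - countTrue f) + t * countTrue g by ring,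
          Real.exp_add, Real.exp_add]
        ring
      rw [this]
      have h1 : (1:ℝ) ≤ Real.exp (t * ((countTrue g : ℝ) - countTrue f)) := by
        rw [Real.one_le_exp_iff]
        have : (countTrue f : ℝ) ≤ countTrue g := by exact_mod_cast hle
        exact mul_nonneg ht0 (by linarith)
      calc (∏ i, if f i then sP else 1 - sP) * (∏ i, if g i then sM else 1 - sM)
          = (∏ i, if f i then sP else 1 - sP) * (∏ i, if g i then sM else 1 - sM) * 1 := by ring
        _ ≤ _ := by
            refine mul_le_mul_of_nonneg_left h1 ?_
            exact mul_nonneg (Finset.prod_nonneg fun i _ => hwp _)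
              (Finset.prod_nonneg fun i _ => hwm _)
    · rintro ⟨f, g⟩ _ _
      refine mul_nonneg (Real.exp_nonneg _) (mul_nonneg ?_ ?_)
      · rw [hFval]
        exact mul_nonneg (Finset.prod_nonneg fun i _ => hwp _) (Real.exp_nonneg _)
      · rw [hGval]
        exact mul_nonneg (Finset.prod_nonneg fun i _ => hwm _) (Real.exp_nonneg _)
  refine le_trans step1 (le_of_eq ?_)
  rw [← Finset.mul_sum, Fintype.sum_prod_type]
  simp only [← Finset.sum_mul, ← Finset.mul_sum]
  rw [mul_assoc]
  congr 1
  congr 1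
  · rw [hF, sum_prod_apply (fun b => (if b then sP else 1 - sP) * (if b then 1 else Real.exp t))]
    norm_num
  · rw [hG, sum_prod_apply (fun b => (if b then sM else 1 - sM) * (if b then Real.exp t else 1))]
    norm_num

set_option maxHeartbeats 1000000 in
lemma analytic_bound (ε α : ℝ) (hε0 : 0 < ε) (hε2 : ε < 1/2) (hα0 : 0 < α) (hα4 : α < 1/4)
    (m : ℕ) (hmN : 8 / α ^ 8 * Real.log (4 / ε) ≤ (2 * m : ℝ))
    (sP sM : ℝ) (hsm0 : 0 ≤ sM) (hsp1 : sP ≤ 1) (hsp0 : 0 ≤ sP) (hsm1 : sM ≤ 1)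
    (hgap : (3 / 2) * α ^ 4 ≤ sP - sM) :
    Real.exp (-((3/4 * α^4) * m)) * (sP + (1 - sP) * Real.exp (3/4 * α^4)) ^ m
        * (sM * Real.exp (3/4 * α^4) + (1 - sM)) ^ m ≤ ε / 4 := by
  set t : ℝ := 3/4 * α^4 with htdef
  set L : ℝ := Real.log (4 / ε) with hLdef
  have hα8 : 0 < α ^ 8 := by positivity
  have ht0 : 0 < t := by positivity
  have hαsmall : α ^ 4 ≤ (1/4:ℝ)^4 := pow_le_pow_left₀ hα0.le hα4.le 4
  have ht1 : t ≤ 1 := by rw [htdef]; nlinarith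
  have hE1 : 1 ≤ Real.exp t := Real.one_le_exp ht0.le
  have hE0 : 0 ≤ Real.exp t - 1 := by linarith
  have hEub : Real.exp t ≤ 1 + t + t ^ 2 := by
    have h := Real.exp_bound' ht0.le ht1 (n := 2) (by norm_num)
    norm_num [Finset.sum_range_succ] at h
    nlinarith [sq_nonneg t]
  have hA1 : sP + (1 - sP) * Real.exp t ≤ Real.exp ((1 - sP) * (Real.exp t - 1)) := by
    have := Real.add_one_le_exp ((1 - sP) * (Real.exp t - 1))
    nlinarith
  have hB1 : sM * Real.exp t + (1 - sM) ≤ Real.exp (sM * (Real.exp t - 1)) := by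
    have := Real.add_one_le_exp (sM * (Real.exp t - 1))
    nlinarith
  have hA0 : 0 ≤ sP + (1 - sP) * Real.exp t := by nlinarith
  have hB0 : 0 ≤ sM * Real.exp t + (1 - sM) := by nlinarith
  have hm0 : (0:ℝ) ≤ (m:ℝ) := Nat.cast_nonneg m
  have hpow : Real.exp (-(t * m)) * (sP + (1 - sP) * Real.exp t) ^ m
      * (sM * Real.exp t + (1 - sM)) ^ m
      ≤ Real.exp (-(t * m) + (m:ℝ) * ((1 - sP) * (Real.exp t - 1))
          + (m:ℝ) * (sM * (Real.exp t - 1))) := by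
    rw [Real.exp_add, Real.exp_add, Real.exp_nat_mul, Real.exp_nat_mul]
    gcongr
  have hL0 : 0 ≤ L := Real.log_nonneg (by rw [le_div_iff₀ hε0]; linarith)
  have hδ'1 : (0:ℝ) ≤ 1 - 3/2 * α^4 := by nlinarith
  have hkey : -t + (1 - 3/2 * α^4) * (t + t^2) ≤ -(9/16) * α^8 := by
    have h12 : (0:ℝ) ≤ α^12 := by positivity
    have : -t + (1 - 3/2 * α^4) * (t + t^2) = -(9/16)*α^8 - (27/32)*α^12 := by
      rw [htdef]; ring
    rw [this]; linarith
  have hmα : 4 * L ≤ (m:ℝ) * α ^ 8 := by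
    rw [div_mul_eq_mul_div, div_le_iff₀ hα8] at hmN
    nlinarith
  have hmain : -(t*(m:ℝ)) + (m:ℝ) * ((1 - 3/2 * α^4)*(t+t^2)) ≤ -L := by
    have e1 : -(t*(m:ℝ)) + (m:ℝ) * ((1 - 3/2*α^4)*(t+t^2))
        = (m:ℝ) * (-t + (1 - 3/2*α^4)*(t+t^2)) := by ring
    have e2 := mul_le_mul_of_nonneg_left hkey hm0
    have e3 : (m:ℝ) * (-(9/16)*α^8) = -(9/16)*((m:ℝ)*α^8) := by ring
    rw [e3] at e2
    rw [e1]
    linarith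
  have hsum : (1 - sP) * (Real.exp t - 1) + sM * (Real.exp t - 1)
      ≤ (1 - 3/2 * α^4) * (t + t^2) := by
    calc (1 - sP) * (Real.exp t - 1) + sM * (Real.exp t - 1)
        = (1 - (sP - sM)) * (Real.exp t - 1) := by ring
      _ ≤ (1 - 3/2 * α^4) * (Real.exp t - 1) :=
          mul_le_mul_of_nonneg_right (by linarith) hE0
      _ ≤ _ := mul_le_mul_of_nonneg_left (by nlinarith) hδ'1
  have hexp : -(t * m) + (m:ℝ) * ((1 - sP) * (Real.exp t - 1))
      + (m:ℝ) * (sM * (Real.exp t - 1)) ≤ -L := by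
    have hdist := mul_le_mul_of_nonneg_left hsum hm0
    have e4 : (m:ℝ) * ((1 - sP) * (Real.exp t - 1) + sM * (Real.exp t - 1))
        = (m:ℝ) * ((1 - sP) * (Real.exp t - 1)) + (m:ℝ) * (sM * (Real.exp t - 1)) := by ring
    rw [e4] at hdist
    linarith
  calc Real.exp (-(t * m)) * (sP + (1 - sP) * Real.exp t) ^ m
        * (sM * Real.exp t + (1 - sM)) ^ m
      ≤ Real.exp (-(t * m) + (m:ℝ) * ((1 - sP) * (Real.exp t - 1))
          + (m:ℝ) * (sM * (Real.exp t - 1))) := hpow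
    _ ≤ Real.exp (-L) := Real.exp_le_exp.2 hexp
    _ = ε / 4 := by
        rw [hLdef, Real.exp_neg, Real.exp_log (by positivity)]
        field_simp

theorem stmt8 (ε α : ℝ) (hε : ε ∈ Set.Ioo (0 : ℝ) (1 / 2)) (hα : α ∈ Set.Ioo (0 : ℝ) (1 / 4))
    (m : ℕ) (hm : 1 ≤ m) (hmN : 8 / α ^ 8 * Real.log (4 / ε) ≤ (2 * m : ℝ))
    (sMinus sPlus : ℝ) (h0 : 0 ≤ sMinus) (hlt : sMinus < sPlus) (h1 : sPlus ≤ 1)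
    (hgap : (3 / 2) * α ^ 4 ≤ sPlus - sMinus) :
    (trials m sPlus).prod (trials m sMinus) {fg | countTrue fg.1 ≤ countTrue fg.2}
      < ENNReal.ofReal (ε / 2) := by
  obtain ⟨hε0, hε2⟩ := hε
  obtain ⟨hα0, hα4⟩ := hα
  have hsp0 : 0 ≤ sPlus := h0.trans hlt.le
  have hsm1 : sMinus ≤ 1 := hlt.le.trans h1
  haveI : DecidablePred (· ∈ {fg : (Fin m → Bool) × (Fin m → Bool) |
      countTrue fg.1 ≤ countTrue fg.2}) := fun fg => Nat.decLe _ _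
  have hfil : Finset.univ.filter
        (· ∈ {fg : (Fin m → Bool) × (Fin m → Bool) | countTrue fg.1 ≤ countTrue fg.2})
      = Finset.univ.filter
        (fun fg : (Fin m → Bool) × (Fin m → Bool) => countTrue fg.1 ≤ countTrue fg.2) := by
    ext fg; simp [Set.mem_setOf_eq]
  have hterm : ∀ fg : (Fin m → Bool) × (Fin m → Bool),
      (trials m sPlus).prod (trials m sMinus) {fg}
      = ENNReal.ofReal ((∏ i, if fg.1 i then sPlus else 1 - sPlus)
          * (∏ i, if fg.2 i then sMinus else 1 - sMinus)) := by
    rintro ⟨f, g⟩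
    rw [← Set.singleton_prod_singleton, Measure.prod_prod,
      trials_singleton m sPlus hsp0 h1 f, trials_singleton m sMinus h0 hsm1 g,
      ← ENNReal.ofReal_mul (Finset.prod_nonneg fun i _ => by split <;> linarith)]
  have hnn : ∀ fg : (Fin m → Bool) × (Fin m → Bool),
      0 ≤ (∏ i, if fg.1 i then sPlus else 1 - sPlus)
          * (∏ i, if fg.2 i then sMinus else 1 - sMinus) := by
    intro fg
    refine mul_nonneg (Finset.prod_nonneg fun i _ => by split <;> linarith)
      (Finset.prod_nonneg fun i _ => by split <;> linarith)
  have hmeas : (trials m sPlus).prod (trials m sMinus)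
        {fg | countTrue fg.1 ≤ countTrue fg.2}
      = ENNReal.ofReal (∑ fg ∈ Finset.univ.filter
          (fun fg : (Fin m → Bool) × (Fin m → Bool) => countTrue fg.1 ≤ countTrue fg.2),
        (∏ i, if fg.1 i then sPlus else 1 - sPlus)
          * (∏ i, if fg.2 i then sMinus else 1 - sMinus)) := by
    rw [measure_eq_sum, hfil, ENNReal.ofReal_sum_of_nonneg (fun fg _ => hnn fg)]
    exact Finset.sum_congr rfl fun fg _ => hterm fg
  have hb : (∑ fg ∈ Finset.univ.filter
        (fun fg : (Fin m → Bool) × (Fin m → Bool) => countTrue fg.1 ≤ countTrue fg.2),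
      (∏ i, if fg.1 i then sPlus else 1 - sPlus)
        * (∏ i, if fg.2 i then sMinus else 1 - sMinus)) ≤ ε / 4 :=
    (real_bound m (3/4 * α^4) sPlus sMinus (by positivity) hsp0 h1 h0 hsm1).trans
      (analytic_bound ε α hε0 hε2 hα0 hα4 m hmN sPlus sMinus h0 h1 hsp0 hsm1 hgap)
  rw [hmeas]
  calc ENNReal.ofReal _ ≤ ENNReal.ofReal (ε / 4) := ENNReal.ofReal_le_ofReal hb
    _ < ENNReal.ofReal (ε / 2) := by
        rw [ENNReal.ofReal_lt_ofReal_iff (by linarith)]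
        linarith
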